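/- arXiv:2506.20072 — 3 statements merged into one kernel-verified Lean document; each statement's English description precedes it below -/
import Mathlib

section
/- Let G be a d-regular finite simple graph with E edges, let J be a δ-regular spanning subgraph of G with h edges, where δ ≥ 1, and set Δ = d − δ. For every integer k with h ≤ k ≤ E, the number of permutations ω of the edges of G satisfying k(ω) = k and J ⊆ G_ω equals h · (k−1)! · (E−k)! · [ 2·binom(E−h−Δ, k−h) − binom(E−h−2Δ, k−h) ], where binom(a, b) is interpreted as 0 when b > a. -/
open Finset

/-- The degree of a vertex `v` in the graph whose edge set is the finite set `s`
of edges (elements of `Sym2 V`). -/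
def degIn {V : Type*} [DecidableEq V] (s : Finset (Sym2 V)) (v : V) : ℕ :=
  (s.filter (fun e => v ∈ e)).card

/-- Given an ordering `ω` of a finite set `s` of edges, the set consisting of the
first `i` edges `e_{ω(1)}, …, e_{ω(i)}`. -/
def prefixEdges {V : Type*} [DecidableEq V] {s : Finset (Sym2 V)}
    (ω : Fin s.card ≃ {e : Sym2 V // e ∈ s}) (i : ℕ) : Finset (Sym2 V) :=
  (Finset.univ.filter (fun j : Fin s.card => (j : ℕ) < i)).image (fun j => (ω j : Sym2 V))

/-- `k(ω)`: the least `i` such that every vertex has degree at least `δ` in the graph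
formed by the first `i` edges of the ordering `ω`. -/
noncomputable def stopIndex {V : Type*} [Fintype V] [DecidableEq V] (δ : ℕ)
    {s : Finset (Sym2 V)} (ω : Fin s.card ≃ {e : Sym2 V // e ∈ s}) : ℕ :=
  sInf {i | ∀ v : V, δ ≤ degIn (prefixEdges ω i) v}

/-- The edge set of `G_ω`, i.e. the first `k(ω)` edges of the ordering `ω`. -/
noncomputable def finalEdges {V : Type*} [Fintype V] [DecidableEq V] (δ : ℕ)
    {s : Finset (Sym2 V)} (ω : Fin s.card ≃ {e : Sym2 V // e ∈ s}) : Finset (Sym2 V) :=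
  prefixEdges ω (stopIndex δ ω)

/-- A graph is `δ`-regular: every vertex has exactly `δ` neighbours. -/
def regOfDegree {V : Type*} (J : SimpleGraph V) (δ : ℕ) : Prop :=
  ∀ v : V, (J.neighborSet v).ncard = δ

section Basics

variable {V : Type*} [DecidableEq V] {s : Finset (Sym2 V)}
  {ω : Fin s.card ≃ {e : Sym2 V // e ∈ s}}

lemma mem_prefixEdges {i : ℕ} {g : Sym2 V} :
    g ∈ prefixEdges ω i ↔ ∃ j : Fin s.card, (j : ℕ) < i ∧ (ω j : Sym2 V) = g := by
  simp [prefixEdges]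

lemma prefixEdges_subset {i : ℕ} : prefixEdges ω i ⊆ s := by
  intro g hg
  obtain ⟨j, _, rfl⟩ := mem_prefixEdges.mp hg
  exact (ω j).2

lemma prefixEdges_mono {i i' : ℕ} (h : i ≤ i') : prefixEdges ω i ⊆ prefixEdges ω i' := by
  intro g hg
  obtain ⟨j, hj, rfl⟩ := mem_prefixEdges.mp hg
  exact mem_prefixEdges.mpr ⟨j, lt_of_lt_of_le hj h, rfl⟩

lemma card_prefixEdges {i : ℕ} (h : i ≤ s.card) : (prefixEdges ω i).card = i := by
  rw [prefixEdges, Finset.card_image_of_injective _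
    (fun a b hab => ω.injective (Subtype.ext hab))]
  have : (Finset.univ.filter (fun j : Fin s.card => (j : ℕ) < i)) =
      (Finset.range i).attachFin (fun m hm => lt_of_lt_of_le (Finset.mem_range.mp hm) h) := by
    ext j; simp [Finset.mem_attachFin]
  rw [this, Finset.card_attachFin, Finset.card_range]

lemma prefixEdges_eq_top : prefixEdges ω s.card = s :=
  Finset.eq_of_subset_of_card_le prefixEdges_subset
    (le_of_eq (card_prefixEdges le_rfl).symm)

lemma degIn_mono {t u : Finset (Sym2 V)} (h : t ⊆ u) (v : V) : degIn t v ≤ degIn u v :=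
  Finset.card_le_card (Finset.filter_subset_filter _ h)

lemma not_mem_prefixEdges_self {i : ℕ} (hi : i < s.card) :
    (ω ⟨i, hi⟩ : Sym2 V) ∉ prefixEdges ω i := by
  intro hmem
  obtain ⟨j, hj, hval⟩ := mem_prefixEdges.mp hmem
  have := ω.injective (Subtype.ext hval)
  rw [this] at hj
  simp at hj

lemma prefixEdges_succ {i : ℕ} (hi : i < s.card) :
    prefixEdges ω (i + 1) = insert (ω ⟨i, hi⟩ : Sym2 V) (prefixEdges ω i) := by
  ext g
  simp only [mem_prefixEdges, Finset.mem_insert]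
  constructor
  · rintro ⟨j, hj, rfl⟩
    rcases Nat.lt_succ_iff_lt_or_eq.mp hj with h | h
    · exact Or.inr ⟨j, h, rfl⟩
    · left; congr 2; exact Fin.ext h
  · rintro (h | ⟨j, hj, rfl⟩)
    · exact ⟨⟨i, hi⟩, Nat.lt_succ_self i, h.symm⟩
    · exact ⟨j, Nat.lt_succ_of_lt hj, rfl⟩

end Basics



section CountA

variable {β : Type*} [Fintype β] [DecidableEq β]

lemma countA {N k : ℕ} (hN : Fintype.card β = N) (hk : 1 ≤ k) (hkN : k ≤ N)
    (e : β) (U : Finset β) (heU : e ∉ U) (hU : U.card = k - 1) :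
    Fintype.card {ω : Fin N ≃ β // ω ⟨k - 1, by omega⟩ = e ∧
        ∀ j : Fin N, (j : ℕ) < k - 1 → (ω j : β) ∈ U} =
      (k - 1).factorial * (N - k).factorial := by
  classical
  have hcardU : Fintype.card {x : β // x ∈ U} = k - 1 := by
    simpa using hU
  have hcardW : Fintype.card {x : β // x ∉ U ∧ x ≠ e} = N - k := by
    rw [Fintype.card_subtype]
    have hfe : (Finset.univ.filter (fun x : β => x ∉ U ∧ x ≠ e)) = univ \ insert e U := by
      ext x
      simp only [mem_filter, mem_univ, true_and, mem_sdiff, mem_insert, not_or]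
      tauto
    rw [hfe, Finset.card_sdiff_of_subset (Finset.subset_univ _), Finset.card_insert_of_notMem heU,
      hU, Finset.card_univ, hN]
    omega
  have hpN : k - 1 < N := by omega
  set p : Fin N := ⟨k - 1, hpN⟩ with hp
  have hlt1 : ∀ i : Fin (k - 1), (i : ℕ) < N := fun i => by have := i.isLt; omega
  have hσbij : ∀ (ω : Fin N ≃ β) (hω : ω p = e ∧ ∀ j : Fin N, (j : ℕ) < k - 1 → (ω j : β) ∈ U),
      Function.Bijective (fun i : Fin (k - 1) =>
        (⟨ω ⟨i, hlt1 i⟩, hω.2 ⟨i, hlt1 i⟩ i.isLt⟩ : {x : β // x ∈ U})) := by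
    intro ω hω
    refine (Fintype.bijective_iff_injective_and_card _).mpr ⟨?_, by simp [hcardU]⟩
    intro i1 i2 hi
    have h2 : (⟨(i1 : ℕ), hlt1 i1⟩ : Fin N) = ⟨(i2 : ℕ), hlt1 i2⟩ :=
      ω.injective (Subtype.ext_iff.mp hi)
    have h3 : (i1 : ℕ) = (i2 : ℕ) := by simpa using h2
    exact Fin.ext h3
  let σ : ∀ (ω : Fin N ≃ β), (ω p = e ∧ ∀ j : Fin N, (j : ℕ) < k - 1 → (ω j : β) ∈ U) →
      (Fin (k - 1) ≃ {x : β // x ∈ U}) := fun ω hω => Equiv.ofBijective _ (hσbij ω hω)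
  have hσval : ∀ ω hω (i : Fin (k - 1)), ((σ ω hω i : {x : β // x ∈ U}) : β) = ω ⟨i, hlt1 i⟩ :=
    fun ω hω i => rfl
  have hlt2 : ∀ i : Fin (N - k), k + (i : ℕ) < N := fun i => by have := i.isLt; omega
  have hτmem : ∀ (ω : Fin N ≃ β) (hω : ω p = e ∧ ∀ j : Fin N, (j : ℕ) < k - 1 → (ω j : β) ∈ U)
      (i : Fin (N - k)), (ω ⟨k + i, hlt2 i⟩ : β) ∉ U ∧ (ω ⟨k + i, hlt2 i⟩ : β) ≠ e := by
    intro ω hω i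
    constructor
    · intro hx
      obtain ⟨i', hi'⟩ := (σ ω hω).surjective ⟨_, hx⟩
      have hval : ω ⟨(i' : ℕ), hlt1 i'⟩ = ω ⟨k + i, hlt2 i⟩ := congrArg Subtype.val hi'
      have h2 : (i' : ℕ) = k + i := by simpa using ω.injective hval
      have := i'.isLt
      omega
    · intro hx
      have h2 : (⟨k + i, hlt2 i⟩ : Fin N) = p := ω.injective (hx.trans hω.1.symm)
      have h3 : k + (i : ℕ) = k - 1 := by simpa [hp] using h2
      omega
  have hτbij : ∀ (ω : Fin N ≃ β) (hω : ω p = e ∧ ∀ j : Fin N, (j : ℕ) < k - 1 → (ω j : β) ∈ U),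
      Function.Bijective (fun i : Fin (N - k) =>
        (⟨ω ⟨k + i, hlt2 i⟩, hτmem ω hω i⟩ : {x : β // x ∉ U ∧ x ≠ e})) := by
    intro ω hω
    refine (Fintype.bijective_iff_injective_and_card _).mpr ⟨?_, by simp [hcardW]⟩
    intro i1 i2 hi
    have h2 : (⟨k + (i1 : ℕ), hlt2 i1⟩ : Fin N) = ⟨k + (i2 : ℕ), hlt2 i2⟩ :=
      ω.injective (Subtype.ext_iff.mp hi)
    have h3 : k + (i1 : ℕ) = k + (i2 : ℕ) := by simpa using h2
    exact Fin.ext (by omega)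
  let τ : ∀ (ω : Fin N ≃ β), (ω p = e ∧ ∀ j : Fin N, (j : ℕ) < k - 1 → (ω j : β) ∈ U) →
      (Fin (N - k) ≃ {x : β // x ∉ U ∧ x ≠ e}) := fun ω hω => Equiv.ofBijective _ (hτbij ω hω)
  have hτval : ∀ ω hω (i : Fin (N - k)),
      ((τ ω hω i : {x : β // x ∉ U ∧ x ≠ e}) : β) = ω ⟨k + i, hlt2 i⟩ := fun ω hω i => rfl
  let Φ : {ω : Fin N ≃ β // ω p = e ∧ ∀ j : Fin N, (j : ℕ) < k - 1 → (ω j : β) ∈ U} →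
      (Fin (k - 1) ≃ {x : β // x ∈ U}) × (Fin (N - k) ≃ {x : β // x ∉ U ∧ x ≠ e}) :=
    fun x => (σ x.1 x.2, τ x.1 x.2)
  have hΦinj : Function.Injective Φ := by
    rintro ⟨ω1, h1⟩ ⟨ω2, h2⟩ heq
    have hσeq : σ ω1 h1 = σ ω2 h2 := congrArg Prod.fst heq
    have hτeq : τ ω1 h1 = τ ω2 h2 := congrArg Prod.snd heq
    refine Subtype.ext (Equiv.ext fun j => ?_)
    have classify : (j : ℕ) < k - 1 ∨ (j : ℕ) = k - 1 ∨ k ≤ (j : ℕ) := by omega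
    rcases classify with hj | hj | hj
    · have h3 := DFunLike.congr_fun hσeq ⟨(j : ℕ), hj⟩
      have hjj : j = ⟨(j : ℕ), j.isLt⟩ := Fin.ext rfl
      rw [hjj]
      exact congrArg Subtype.val h3
    · have hjp : j = p := Fin.ext hj
      rw [hjp, h1.1, h2.1]
    · have hjk : (j : ℕ) - k < N - k := by have := j.isLt; omega
      have h3 := DFunLike.congr_fun hτeq ⟨(j : ℕ) - k, hjk⟩
      have hjj : j = ⟨k + ((j : ℕ) - k), hlt2 ⟨(j : ℕ) - k, hjk⟩⟩ := Fin.ext (by simp; omega)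
      rw [hjj]
      exact congrArg Subtype.val h3
  have hΦsurj : Function.Surjective Φ := by
    rintro ⟨σ0, τ0⟩
    set g : Fin N → β := fun j =>
      if h1 : (j : ℕ) < k - 1 then (σ0 ⟨j, h1⟩ : β)
      else if h2 : (j : ℕ) < k then e
      else (τ0 ⟨(j : ℕ) - k, by have := j.isLt; omega⟩ : β) with hg
    have hgU : ∀ (j : Fin N) (h : (j : ℕ) < k - 1), g j = (σ0 ⟨j, h⟩ : β) := by
      intro j h; simp only [hg]; rw [dif_pos h]
    have hge : ∀ (j : Fin N), (j : ℕ) = k - 1 → g j = e := by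
      intro j h; simp only [hg]; rw [dif_neg (by omega), dif_pos (by omega)]
    have hgW : ∀ (j : Fin N) (h : k ≤ (j : ℕ)),
        g j = (τ0 ⟨(j : ℕ) - k, by have := j.isLt; omega⟩ : β) := by
      intro j h; simp only [hg]; rw [dif_neg (by omega), dif_neg (by omega)]
    have ginj : Function.Injective g := by
      intro a b hab
      have classifya : (a : ℕ) < k - 1 ∨ (a : ℕ) = k - 1 ∨ k ≤ (a : ℕ) := by omega
      have classifyb : (b : ℕ) < k - 1 ∨ (b : ℕ) = k - 1 ∨ k ≤ (b : ℕ) := by omega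
      rcases classifya with h1 | h1 | h1 <;> rcases classifyb with h2 | h2 | h2
      · rw [hgU a h1, hgU b h2] at hab
        have h3 := σ0.injective (Subtype.ext hab)
        have h4 : (a : ℕ) = (b : ℕ) := by simpa using congrArg Fin.val h3
        exact Fin.ext h4
      · rw [hgU a h1, hge b h2] at hab
        exact absurd (hab ▸ (σ0 ⟨a, h1⟩).2) heU
      · rw [hgU a h1, hgW b h2] at hab
        exact absurd (hab ▸ (σ0 ⟨a, h1⟩).2) (τ0 _).2.1
      · rw [hge a h1, hgU b h2] at hab
        exact absurd (hab.symm ▸ (σ0 ⟨b, h2⟩).2) heU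
      · exact Fin.ext (h1.trans h2.symm)
      · rw [hge a h1, hgW b h2] at hab
        exact absurd hab.symm (τ0 _).2.2
      · rw [hgW a h1, hgU b h2] at hab
        exact absurd (hab.symm ▸ (σ0 ⟨b, h2⟩).2) (τ0 _).2.1
      · rw [hgW a h1, hge b h2] at hab
        exact absurd hab (τ0 _).2.2
      · rw [hgW a h1, hgW b h2] at hab
        have h3 := τ0.injective (Subtype.ext hab)
        have h4 : (a : ℕ) - k = (b : ℕ) - k := by simpa using congrArg Fin.val h3
        exact Fin.ext (by omega)
    have gbij : Function.Bijective g :=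
      (Fintype.bijective_iff_injective_and_card g).mpr ⟨ginj, by simp [hN]⟩
    have hc1 : (Equiv.ofBijective g gbij) p = e := hge p rfl
    have hc2 : ∀ j : Fin N, (j : ℕ) < k - 1 → ((Equiv.ofBijective g gbij) j : β) ∈ U := by
      intro j hj
      show g j ∈ U
      rw [hgU j hj]; exact (σ0 ⟨j, hj⟩).2
    refine ⟨⟨Equiv.ofBijective g gbij, hc1, hc2⟩,
      Prod.ext (Equiv.ext fun i => Subtype.ext ?_) (Equiv.ext fun i => Subtype.ext ?_)⟩
    · show g ⟨(i : ℕ), hlt1 i⟩ = (σ0 i : β)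
      rw [hgU _ i.isLt]
    · show g ⟨k + (i : ℕ), hlt2 i⟩ = (τ0 i : β)
      rw [hgW ⟨k + (i : ℕ), hlt2 i⟩ (Nat.le_add_right k i)]
      exact congrArg (fun x : Fin (N - k) => (τ0 x : β))
        (Fin.ext (show k + (i : ℕ) - k = (i : ℕ) by omega))
  rw [Fintype.card_congr (Equiv.ofBijective Φ ⟨hΦinj, hΦsurj⟩), Fintype.card_prod,
    Fintype.card_equiv (Fintype.equivFinOfCardEq hcardU).symm,
    Fintype.card_equiv (Fintype.equivFinOfCardEq hcardW).symm,
    Fintype.card_fin, Fintype.card_fin]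

end CountA



section Sandwich

lemma card_sandwich {α : Type*} [DecidableEq α] (A C : Finset α) (hAC : A ⊆ C) {n : ℕ}
    (hn : A.card ≤ n) :
    ((C.powersetCard n).filter (fun U => A ⊆ U)).card =
      (C.card - A.card).choose (n - A.card) := by
  rw [← Finset.card_sdiff_of_subset hAC, ← Finset.card_powersetCard]
  apply Finset.card_nbij' (i := fun U => U \ A) (j := fun W => W ∪ A)
  · intro U hU
    simp only [Finset.mem_coe, Finset.mem_filter, Finset.mem_powersetCard] at hU
    obtain ⟨⟨hUC, hcard⟩, hAU⟩ := hU
    exact Finset.mem_powersetCard.mpr ⟨Finset.sdiff_subset_sdiff hUC Finset.Subset.rfl,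
      by rw [Finset.card_sdiff_of_subset hAU, hcard]⟩
  · intro W hW
    rw [Finset.mem_coe, Finset.mem_powersetCard] at hW
    obtain ⟨hWsub, hWcard⟩ := hW
    obtain ⟨hWC, hWdisj⟩ := Finset.subset_sdiff.mp hWsub
    refine Finset.mem_filter.mpr ⟨Finset.mem_powersetCard.mpr
      ⟨Finset.union_subset hWC hAC, ?_⟩, Finset.subset_union_right⟩
    rw [Finset.card_union_of_disjoint hWdisj, hWcard]
    have := Finset.card_le_card hAC
    omega
  · intro U hU
    simp only [Finset.mem_coe, Finset.mem_filter] at hU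
    exact Finset.sdiff_union_of_subset hU.2
  · intro W hW
    rw [Finset.mem_coe, Finset.mem_powersetCard] at hW
    obtain ⟨hWC, hWdisj⟩ := Finset.subset_sdiff.mp hW.1
    exact Finset.union_sdiff_cancel_right hWdisj

end Sandwich

section GraphChar

open SimpleGraph

variable {V : Type*} [Fintype V] [DecidableEq V]

lemma degIn_edgeFinset (J : SimpleGraph V) [DecidableRel J.Adj] (v : V) :
    degIn J.edgeFinset v = J.degree v := by
  rw [degIn, ← SimpleGraph.incidenceFinset_eq_filter, SimpleGraph.card_incidenceFinset_eq_degree]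

lemma stop_char (G J : SimpleGraph V) [DecidableRel G.Adj] [DecidableRel J.Adj]
    (δ k : ℕ) (hJG : J ≤ G) (hJ : J.IsRegularOfDegree δ)
    (hk : 1 ≤ k)
    (ω : Fin G.edgeFinset.card ≃ {e : Sym2 V // e ∈ G.edgeFinset}) :
    (stopIndex δ ω = k ∧ J.edgeSet ⊆ ↑(finalEdges δ ω)) ↔
      (J.edgeFinset ⊆ prefixEdges ω k ∧ ∃ v, degIn (prefixEdges ω (k - 1)) v < δ) := by
  have hsub : J.edgeFinset ⊆ G.edgeFinset := SimpleGraph.edgeFinset_subset_edgeFinset.mpr hJG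
  have degJ : ∀ v : V, degIn J.edgeFinset v = δ := fun v => by
    rw [degIn_edgeFinset]; exact hJ v
  set T : Set ℕ := {i | ∀ v : V, δ ≤ degIn (prefixEdges ω i) v} with hT
  have hstopdef : stopIndex δ ω = sInf T := rfl
  have hmemT : ∀ {i : ℕ}, J.edgeFinset ⊆ prefixEdges ω i → i ∈ T := fun {i} hJi v =>
    (degJ v) ▸ degIn_mono hJi v
  have hTup : ∀ i i', i ≤ i' → i ∈ T → i' ∈ T := fun i i' hii' hi v =>
    le_trans (hi v) (degIn_mono (prefixEdges_mono hii') v)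
  have hTne : T.Nonempty := ⟨G.edgeFinset.card, hmemT (by rw [prefixEdges_eq_top]; exact hsub)⟩
  constructor
  · rintro ⟨hstop, hJfin⟩
    have hJk : J.edgeFinset ⊆ prefixEdges ω k := by
      intro g hg
      have hg' : g ∈ J.edgeSet := SimpleGraph.mem_edgeFinset.mp hg
      have := hJfin hg'
      rw [finalEdges, hstop] at this
      exact this
    refine ⟨hJk, ?_⟩
    have hknotT : k - 1 ∉ T := by
      intro hmem
      have := Nat.sInf_le hmem
      rw [← hstopdef, hstop] at this
      omega
    rw [hT, Set.mem_setOf_eq] at hknotT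
    push_neg at hknotT
    exact hknotT
  · rintro ⟨hJk, v, hv⟩
    have hkT : k ∈ T := hmemT hJk
    have hstop : stopIndex δ ω = k := by
      rw [hstopdef]
      refine le_antisymm (Nat.sInf_le hkT) ?_
      by_contra hlt
      push_neg at hlt
      have h1 : sInf T ∈ T := Nat.sInf_mem hTne
      have h2 : k - 1 ∈ T := hTup _ _ (by omega) h1
      exact absurd (h2 v) (not_le.mpr hv)
    refine ⟨hstop, ?_⟩
    rw [finalEdges, hstop]
    intro g hg
    exact Finset.mem_coe.mpr (hJk (SimpleGraph.mem_edgeFinset.mpr hg))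

lemma stop_char2 (G J : SimpleGraph V) [DecidableRel G.Adj] [DecidableRel J.Adj]
    (δ k : ℕ) (hδ : 1 ≤ δ) (hJG : J ≤ G) (hJ : J.IsRegularOfDegree δ)
    (hk : 1 ≤ k) (hp : k - 1 < G.edgeFinset.card)
    (ω : Fin G.edgeFinset.card ≃ {e : Sym2 V // e ∈ G.edgeFinset}) :
    (J.edgeFinset ⊆ prefixEdges ω k ∧ ∃ v, degIn (prefixEdges ω (k - 1)) v < δ) ↔
      ((ω ⟨k - 1, hp⟩ : Sym2 V) ∈ J.edgeFinset ∧
        J.edgeFinset.erase (ω ⟨k - 1, hp⟩ : Sym2 V) ⊆ prefixEdges ω (k - 1) ∧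
        ∃ v ∈ (ω ⟨k - 1, hp⟩ : Sym2 V),
          ∀ g ∈ prefixEdges ω (k - 1), v ∈ g → g ∈ J.edgeFinset) := by
  have degJ : ∀ v : V, degIn J.edgeFinset v = δ := fun v => by
    rw [degIn_edgeFinset]; exact hJ v
  set e : Sym2 V := (ω ⟨k - 1, hp⟩ : Sym2 V) with he
  have hks : k - 1 + 1 = k := by omega
  have hins : prefixEdges ω k = insert e (prefixEdges ω (k - 1)) := by
    have h2 := prefixEdges_succ (ω := ω) hp
    rw [hks] at h2
    exact h2
  have hnot : e ∉ prefixEdges ω (k - 1) := not_mem_prefixEdges_self hp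
  constructor
  · rintro ⟨hJk, v0, hv0⟩
    have heJ : e ∈ J.edgeFinset := by
      by_contra hne
      have hJpre : J.edgeFinset ⊆ prefixEdges ω (k - 1) := by
        intro g hg
        have := hJk hg
        rw [hins] at this
        rcases Finset.mem_insert.mp this with h | h
        · exact absurd (h ▸ hg) hne
        · exact h
      exact absurd ((degJ v0) ▸ degIn_mono hJpre v0) (not_le.mpr hv0)
    have hv0e : v0 ∈ e := by
      by_contra hv0e
      have hss : J.edgeFinset.filter (fun g => v0 ∈ g) ⊆
          (prefixEdges ω (k - 1)).filter (fun g => v0 ∈ g) := by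
        intro g hg
        obtain ⟨hgJ, hgv⟩ := Finset.mem_filter.mp hg
        refine Finset.mem_filter.mpr ⟨?_, hgv⟩
        have := hJk hgJ
        rw [hins] at this
        rcases Finset.mem_insert.mp this with h | h
        · exact absurd (h ▸ hgv) hv0e
        · exact h
      have hle := Finset.card_le_card hss
      have hJv : (J.edgeFinset.filter (fun g => v0 ∈ g)).card = δ := degJ v0
      have hdeg : degIn (prefixEdges ω (k - 1)) v0 =
        ((prefixEdges ω (k - 1)).filter (fun g => v0 ∈ g)).card := rfl
      omega
    refine ⟨heJ, ?_, v0, hv0e, ?_⟩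
    · intro g hg
      obtain ⟨hgne, hgJ⟩ := Finset.mem_erase.mp hg
      have := hJk hgJ
      rw [hins] at this
      exact (Finset.mem_insert.mp this).resolve_left hgne
    · intro g hgpre hgv
      by_contra hgnJ
      have hsub2 : insert g ((J.edgeFinset.filter (fun x => v0 ∈ x)).erase e) ⊆
          (prefixEdges ω (k - 1)).filter (fun x => v0 ∈ x) := by
        intro x hx
        rcases Finset.mem_insert.mp hx with rfl | hx
        · exact Finset.mem_filter.mpr ⟨hgpre, hgv⟩
        · obtain ⟨hxe, hxm⟩ := Finset.mem_erase.mp hx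
          obtain ⟨hxJ, hxv⟩ := Finset.mem_filter.mp hxm
          refine Finset.mem_filter.mpr ⟨?_, hxv⟩
          have := hJk hxJ
          rw [hins] at this
          exact (Finset.mem_insert.mp this).resolve_left hxe
      have hgni : g ∉ (J.edgeFinset.filter (fun x => v0 ∈ x)).erase e := fun hgm =>
        hgnJ (Finset.mem_filter.mp (Finset.mem_erase.mp hgm).2).1
      have hcard : (insert g ((J.edgeFinset.filter (fun x => v0 ∈ x)).erase e)).card =
          ((J.edgeFinset.filter (fun x => v0 ∈ x)).card - 1) + 1 := by
        rw [Finset.card_insert_of_notMem hgni,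
          Finset.card_erase_of_mem (Finset.mem_filter.mpr ⟨heJ, hv0e⟩)]
      have hle := Finset.card_le_card hsub2
      have hJv : (J.edgeFinset.filter (fun x => v0 ∈ x)).card = δ := degJ v0
      have hdeg : degIn (prefixEdges ω (k - 1)) v0 =
        ((prefixEdges ω (k - 1)).filter (fun x => v0 ∈ x)).card := rfl
      omega
  · rintro ⟨heJ, herase, v0, hv0e, hall⟩
    constructor
    · intro g hg
      rw [hins]
      rcases eq_or_ne g e with rfl | hne
      · exact Finset.mem_insert_self _ _
      · exact Finset.mem_insert_of_mem (herase (Finset.mem_erase.mpr ⟨hne, hg⟩))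
    · refine ⟨v0, ?_⟩
      have hsub3 : (prefixEdges ω (k - 1)).filter (fun x => v0 ∈ x) ⊆
          (J.edgeFinset.filter (fun x => v0 ∈ x)).erase e := by
        intro x hx
        obtain ⟨hxp, hxv⟩ := Finset.mem_filter.mp hx
        exact Finset.mem_erase.mpr ⟨fun hxe => hnot (hxe ▸ hxp),
          Finset.mem_filter.mpr ⟨hall x hxp hxv, hxv⟩⟩
      have hle := Finset.card_le_card hsub3
      rw [Finset.card_erase_of_mem (Finset.mem_filter.mpr ⟨heJ, hv0e⟩)] at hle
      have hJv : (J.edgeFinset.filter (fun x => v0 ∈ x)).card = δ := degJ v0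
      have hdeg : degIn (prefixEdges ω (k - 1)) v0 =
        ((prefixEdges ω (k - 1)).filter (fun x => v0 ∈ x)).card := rfl
      omega

end GraphChar

section CardUe

open Finset

variable {V : Type*} [Fintype V] [DecidableEq V]

lemma card_Ue (G J : SimpleGraph V) [DecidableRel G.Adj] [DecidableRel J.Adj]
    (d δ : ℕ) (hG : G.IsRegularOfDegree d) (hJG : J ≤ G) (hJ : J.IsRegularOfDegree δ)
    (h E Δ k : ℕ) (hh : h = J.edgeFinset.card) (hE : E = G.edgeFinset.card)
    (hΔ : Δ = d - δ) (hk1 : h ≤ k) (hk2 : k ≤ E)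
    (e : Sym2 V) (he : e ∈ J.edgeFinset) :
    (((G.edgeFinset.erase e).powersetCard (k - 1)).filter
        (fun U => J.edgeFinset.erase e ⊆ U ∧
          ∃ v ∈ e, ∀ g ∈ U, v ∈ g → g ∈ J.edgeFinset)).card
      + (E - h - 2 * Δ).choose (k - h)
    = 2 * ((E - h - Δ).choose (k - h)) := by
  classical
  have hsub : J.edgeFinset ⊆ G.edgeFinset := SimpleGraph.edgeFinset_subset_edgeFinset.mpr hJG
  have hh1 : 1 ≤ h := by
    rw [hh]
    exact Finset.card_pos.mpr ⟨e, he⟩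
  induction e using Sym2.inductionOn with
  | hf x y =>
  have hadj : J.Adj x y := (SimpleGraph.mem_edgeSet J).mp (SimpleGraph.mem_edgeFinset.mp he)
  have hxy : x ≠ y := hadj.ne
  set B : V → Finset (Sym2 V) :=
    fun v => (G.edgeFinset \ J.edgeFinset).filter (fun g => v ∈ g) with hB
  have hBfil : ∀ v, B v = (G.edgeFinset.filter (fun g => v ∈ g)) \
      (J.edgeFinset.filter (fun g => v ∈ g)) := by
    intro v
    ext g
    simp only [hB, Finset.mem_filter, Finset.mem_sdiff]
    tauto
  have hGfil : ∀ v, (G.edgeFinset.filter (fun g => v ∈ g)).card = d := by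
    intro v
    rw [← SimpleGraph.incidenceFinset_eq_filter, SimpleGraph.card_incidenceFinset_eq_degree]
    exact hG v
  have hJfil : ∀ v, (J.edgeFinset.filter (fun g => v ∈ g)).card = δ := by
    intro v
    rw [← SimpleGraph.incidenceFinset_eq_filter, SimpleGraph.card_incidenceFinset_eq_degree]
    exact hJ v
  have hBcard : ∀ v, (B v).card = Δ := by
    intro v
    rw [hBfil, Finset.card_sdiff_of_subset (Finset.filter_subset_filter _ hsub), hGfil, hJfil, hΔ]
  have hBsubJ : ∀ v, B v ⊆ G.edgeFinset \ J.edgeFinset := fun v => Finset.filter_subset _ _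
  have heB : ∀ v, s(x, y) ∉ B v := by
    intro v hmem
    exact (Finset.mem_sdiff.mp (hBsubJ v hmem)).2 he
  have hBer : ∀ v, B v ⊆ G.edgeFinset.erase s(x, y) := by
    intro v g hg
    exact Finset.mem_erase.mpr ⟨fun hge => (heB v) (hge ▸ hg),
      (Finset.mem_sdiff.mp (hBsubJ v hg)).1⟩
  set A : Finset (Sym2 V) := J.edgeFinset.erase s(x, y) with hA
  have hAcard : A.card = h - 1 := by
    rw [hA, Finset.card_erase_of_mem he, hh]
  have hAdisjB : ∀ v, Disjoint A (B v) := by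
    intro v
    rw [Finset.disjoint_left]
    intro g hgA hgB
    exact (Finset.mem_sdiff.mp (hBsubJ v hgB)).2 (Finset.mem_of_mem_erase hgA)
  have hAsub : ∀ v, A ⊆ (G.edgeFinset.erase s(x, y)) \ B v := by
    intro v
    rw [Finset.subset_sdiff]
    exact ⟨Finset.erase_subset_erase _ hsub, hAdisjB v⟩
  have hBxy : Disjoint (B x) (B y) := by
    rw [Finset.disjoint_left]
    intro g hgx hgy
    have hxg : x ∈ g := (Finset.mem_filter.mp hgx).2
    have hyg : y ∈ g := (Finset.mem_filter.mp hgy).2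
    have : g = s(x, y) := (Sym2.mem_and_mem_iff hxy).mp ⟨hxg, hyg⟩
    exact heB x (this ▸ hgx)
  have hABsub : ∀ v, A ∪ B v ⊆ G.edgeFinset.erase s(x, y) := fun v =>
    Finset.union_subset (Finset.erase_subset_erase _ hsub) (hBer v)
  have hEcard : (G.edgeFinset.erase s(x, y)).card = E - 1 := by
    rw [Finset.card_erase_of_mem (hsub he), hE]
  have hhE : h - 1 + Δ ≤ E - 1 := by
    have h1 := Finset.card_le_card (hABsub x)
    rw [Finset.card_union_of_disjoint (hAdisjB x), hAcard, hBcard, hEcard] at h1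
    exact h1
  have hBu : (B x ∪ B y).card = 2 * Δ := by
    rw [Finset.card_union_of_disjoint hBxy, hBcard, hBcard]
    ring
  have hAdisjBu : Disjoint A (B x ∪ B y) := by
    rw [Finset.disjoint_union_right]
    exact ⟨hAdisjB x, hAdisjB y⟩
  have hABusub : A ∪ (B x ∪ B y) ⊆ G.edgeFinset.erase s(x, y) :=
    Finset.union_subset (Finset.erase_subset_erase _ hsub)
      (Finset.union_subset (hBer x) (hBer y))
  have hhE2 : h - 1 + 2 * Δ ≤ E - 1 := by
    have h1 := Finset.card_le_card hABusub
    rw [Finset.card_union_of_disjoint hAdisjBu, hAcard, hBu, hEcard] at h1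
    exact h1
  -- decompose the big filter as a union
  set F : Finset (Sym2 V) → Finset (Finset (Sym2 V)) :=
    fun Bv => (((G.edgeFinset.erase s(x, y)) \ Bv).powersetCard (k - 1)).filter
      (fun U => A ⊆ U) with hF
  have hclaim1 : ((G.edgeFinset.erase s(x, y)).powersetCard (k - 1)).filter
      (fun U => A ⊆ U ∧ ∃ v ∈ s(x, y), ∀ g ∈ U, v ∈ g → g ∈ J.edgeFinset) =
      F (B x) ∪ F (B y) := by
    ext U
    simp only [hF, Finset.mem_union, Finset.mem_filter, Finset.mem_powersetCard,
      Finset.subset_sdiff]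
    constructor
    · rintro ⟨⟨hUC, hUcard⟩, hAU, v, hve, hcond⟩
      have hdisj : Disjoint U (B v) := by
        rw [Finset.disjoint_left]
        intro g hgU hgB
        exact (Finset.mem_sdiff.mp (hBsubJ v hgB)).2
          (hcond g hgU (Finset.mem_filter.mp hgB).2)
      rcases Sym2.mem_iff.mp hve with rfl | rfl
      · exact Or.inl ⟨⟨⟨hUC, hdisj⟩, hUcard⟩, hAU⟩
      · exact Or.inr ⟨⟨⟨hUC, hdisj⟩, hUcard⟩, hAU⟩
    · have hcase : ∀ v, v ∈ s(x, y) → ((U ⊆ G.edgeFinset.erase s(x, y) ∧ Disjoint U (B v)) ∧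
          U.card = k - 1) ∧ A ⊆ U →
          ((U ⊆ G.edgeFinset.erase s(x, y) ∧ U.card = k - 1) ∧ A ⊆ U ∧
            ∃ v ∈ s(x, y), ∀ g ∈ U, v ∈ g → g ∈ J.edgeFinset) := by
        rintro v hve ⟨⟨⟨hUC, hdisj⟩, hUcard⟩, hAU⟩
        refine ⟨⟨hUC, hUcard⟩, hAU, v, hve, ?_⟩
        intro g hgU hvg
        by_contra hgnJ
        have hgB : g ∈ B v := Finset.mem_filter.mpr
          ⟨Finset.mem_sdiff.mpr ⟨Finset.mem_of_mem_erase (hUC hgU), hgnJ⟩, hvg⟩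
        exact Finset.disjoint_left.mp hdisj hgU hgB
      rintro (h1 | h1)
      · exact hcase x (Sym2.mem_mk_left x y) h1
      · exact hcase y (Sym2.mem_mk_right x y) h1
  have hclaim2 : F (B x) ∩ F (B y) = F (B x ∪ B y) := by
    ext U
    simp only [hF, Finset.mem_inter, Finset.mem_filter, Finset.mem_powersetCard,
      Finset.subset_sdiff, Finset.disjoint_union_right]
    tauto
  have hFcardx : (F (B x)).card = (E - h - Δ).choose (k - h) := by
    rw [hF]
    have hcs := card_sandwich A ((G.edgeFinset.erase s(x, y)) \ B x)
      (hAsub x) (n := k - 1) (by omega)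
    rw [hcs, Finset.card_sdiff_of_subset (hBer x), hEcard, hBcard, hAcard]
    congr 1 <;> omega
  have hFcardy : (F (B y)).card = (E - h - Δ).choose (k - h) := by
    rw [hF]
    have hcs := card_sandwich A ((G.edgeFinset.erase s(x, y)) \ B y)
      (hAsub y) (n := k - 1) (by omega)
    rw [hcs, Finset.card_sdiff_of_subset (hBer y), hEcard, hBcard, hAcard]
    congr 1 <;> omega
  have hAsubu : A ⊆ (G.edgeFinset.erase s(x, y)) \ (B x ∪ B y) := by
    rw [Finset.subset_sdiff]
    exact ⟨Finset.erase_subset_erase _ hsub, hAdisjBu⟩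
  have hFcardu : (F (B x ∪ B y)).card = (E - h - 2 * Δ).choose (k - h) := by
    rw [hF]
    have hcs := card_sandwich A ((G.edgeFinset.erase s(x, y)) \ (B x ∪ B y))
      hAsubu (n := k - 1) (by omega)
    rw [hcs, Finset.card_sdiff_of_subset (Finset.union_subset (hBer x) (hBer y)), hEcard, hBu, hAcard]
    congr 1 <;> omega
  have hunion := Finset.card_union_add_card_inter (F (B x)) (F (B y))
  rw [hclaim2, hFcardx, hFcardy, hFcardu, ← hclaim1] at hunion
  have hfinal : ((G.edgeFinset.erase s(x, y)).powersetCard (k - 1)).filter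
      (fun U => J.edgeFinset.erase s(x, y) ⊆ U ∧
        ∃ v ∈ s(x, y), ∀ g ∈ U, v ∈ g → g ∈ J.edgeFinset) =
      ((G.edgeFinset.erase s(x, y)).powersetCard (k - 1)).filter
      (fun U => A ⊆ U ∧ ∃ v ∈ s(x, y), ∀ g ∈ U, v ∈ g → g ∈ J.edgeFinset) := rfl
  rw [hfinal]
  omega

end CardUe

/-- Let `G` be a `d`-regular finite simple graph with `E` edges, `J` a `δ`-regular
spanning subgraph with `h` edges, `δ ≥ 1`, and `Δ = d − δ`.  For `h ≤ k ≤ E`, the number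
of orderings `ω` of the edges of `G` with `k(ω) = k` and `J ⊆ G_ω` equals
`h·(k−1)!·(E−k)!·[2·C(E−h−Δ, k−h) − C(E−h−2Δ, k−h)]`. -/
theorem count_orderings_with_given_stopping_time
    {V : Type*} [Fintype V] [DecidableEq V] [Nonempty V]
    (G J : SimpleGraph V) [DecidableRel G.Adj] [DecidableRel J.Adj]
    (d δ : ℕ) (hδ : 1 ≤ δ) (hG : G.IsRegularOfDegree d)
    (hJG : J ≤ G) (hJ : J.IsRegularOfDegree δ)
    (h E Δ k : ℕ) (hh : h = J.edgeFinset.card) (hE : E = G.edgeFinset.card)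
    (hΔ : Δ = d - δ) (hk1 : h ≤ k) (hk2 : k ≤ E) :
    ({ω : Fin G.edgeFinset.card ≃ {e : Sym2 V // e ∈ G.edgeFinset} |
        stopIndex δ ω = k ∧ J.edgeSet ⊆ ↑(finalEdges δ ω)}.ncard : ℤ) =
    (h : ℤ) * ((k - 1).factorial : ℤ) * ((E - k).factorial : ℤ) *
      (2 * ((E - h - Δ).choose (k - h) : ℤ) - ((E - h - 2 * Δ).choose (k - h) : ℤ)) := by
  classical
  have hsub : J.edgeFinset ⊆ G.edgeFinset := SimpleGraph.edgeFinset_subset_edgeFinset.mpr hJG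
  have hh1 : 1 ≤ h := by
    obtain ⟨v⟩ := ‹Nonempty V›
    have hdeg : 0 < J.degree v := by rw [hJ v]; omega
    obtain ⟨w, hw⟩ := (SimpleGraph.degree_pos_iff_exists_adj J v).mp hdeg
    have hmem : s(v, w) ∈ J.edgeFinset :=
      SimpleGraph.mem_edgeFinset.mpr ((SimpleGraph.mem_edgeSet J).mpr hw)
    rw [hh]
    exact Finset.card_pos.mpr ⟨_, hmem⟩
  have hk : 1 ≤ k := le_trans hh1 hk1
  have hp : k - 1 < G.edgeFinset.card := by omega
  have hset : {ω : Fin G.edgeFinset.card ≃ {e : Sym2 V // e ∈ G.edgeFinset} |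
      stopIndex δ ω = k ∧ J.edgeSet ⊆ ↑(finalEdges δ ω)} =
      ↑(Finset.univ.filter
        (fun ω : Fin G.edgeFinset.card ≃ {e : Sym2 V // e ∈ G.edgeFinset} =>
          (ω ⟨k - 1, hp⟩ : Sym2 V) ∈ J.edgeFinset ∧
          J.edgeFinset.erase (ω ⟨k - 1, hp⟩ : Sym2 V) ⊆ prefixEdges ω (k - 1) ∧
          ∃ v ∈ (ω ⟨k - 1, hp⟩ : Sym2 V),
            ∀ g ∈ prefixEdges ω (k - 1), v ∈ g → g ∈ J.edgeFinset)) := by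
    ext ω
    simp only [Set.mem_setOf_eq, Finset.coe_filter, Finset.mem_univ, true_and,
      Set.mem_setOf_eq]
    rw [stop_char G J δ k hJG hJ hk ω, stop_char2 G J δ k hδ hJG hJ hk hp ω]
  rw [hset, Set.ncard_coe_finset]
  rw [Finset.card_eq_sum_card_fiberwise
    (f := fun ω : Fin G.edgeFinset.card ≃ {e : Sym2 V // e ∈ G.edgeFinset} =>
      (ω ⟨k - 1, hp⟩ : Sym2 V))
    (t := J.edgeFinset) (fun ω hω => (Finset.mem_filter.mp hω).2.1)]
  -- the per-fiber count
  have key : ∀ e ∈ J.edgeFinset,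
      ((Finset.univ.filter
        (fun ω : Fin G.edgeFinset.card ≃ {e : Sym2 V // e ∈ G.edgeFinset} =>
          (ω ⟨k - 1, hp⟩ : Sym2 V) ∈ J.edgeFinset ∧
          J.edgeFinset.erase (ω ⟨k - 1, hp⟩ : Sym2 V) ⊆ prefixEdges ω (k - 1) ∧
          ∃ v ∈ (ω ⟨k - 1, hp⟩ : Sym2 V),
            ∀ g ∈ prefixEdges ω (k - 1), v ∈ g → g ∈ J.edgeFinset)).filter
        (fun ω => (ω ⟨k - 1, hp⟩ : Sym2 V) = e)).card =
      (((G.edgeFinset.erase e).powersetCard (k - 1)).filter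
        (fun U => J.edgeFinset.erase e ⊆ U ∧
          ∃ v ∈ e, ∀ g ∈ U, v ∈ g → g ∈ J.edgeFinset)).card *
        ((k - 1).factorial * (E - k).factorial) := by
    intro e he
    have heS : e ∈ G.edgeFinset := hsub he
    -- step 1: simplify the double filter
    have hstep1 : (Finset.univ.filter
        (fun ω : Fin G.edgeFinset.card ≃ {e : Sym2 V // e ∈ G.edgeFinset} =>
          (ω ⟨k - 1, hp⟩ : Sym2 V) ∈ J.edgeFinset ∧
          J.edgeFinset.erase (ω ⟨k - 1, hp⟩ : Sym2 V) ⊆ prefixEdges ω (k - 1) ∧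
          ∃ v ∈ (ω ⟨k - 1, hp⟩ : Sym2 V),
            ∀ g ∈ prefixEdges ω (k - 1), v ∈ g → g ∈ J.edgeFinset)).filter
        (fun ω => (ω ⟨k - 1, hp⟩ : Sym2 V) = e) =
        Finset.univ.filter
        (fun ω : Fin G.edgeFinset.card ≃ {e : Sym2 V // e ∈ G.edgeFinset} =>
          (ω ⟨k - 1, hp⟩ : Sym2 V) = e ∧
          J.edgeFinset.erase e ⊆ prefixEdges ω (k - 1) ∧
          ∃ v ∈ e, ∀ g ∈ prefixEdges ω (k - 1), v ∈ g → g ∈ J.edgeFinset) := by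
      ext ω
      simp only [Finset.mem_filter, Finset.mem_univ, true_and]
      constructor
      · rintro ⟨⟨h1, h2, h3⟩, h4⟩
        rw [h4] at h2 h3
        exact ⟨h4, h2, h3⟩
      · rintro ⟨h1, h2, h3⟩
        rw [← h1] at h2 h3
        exact ⟨⟨h1 ▸ he, h2, h3⟩, h1⟩
    rw [hstep1]
    -- step 2: fiber over the prefix set
    rw [Finset.card_eq_sum_card_fiberwise
      (f := fun ω : Fin G.edgeFinset.card ≃ {e : Sym2 V // e ∈ G.edgeFinset} =>
        prefixEdges ω (k - 1))
      (t := ((G.edgeFinset.erase e).powersetCard (k - 1)).filter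
        (fun U => J.edgeFinset.erase e ⊆ U ∧
          ∃ v ∈ e, ∀ g ∈ U, v ∈ g → g ∈ J.edgeFinset))
      ?_]
    · -- each fiber has size (k-1)! * (E-k)!
      rw [Finset.sum_congr rfl ?_, Finset.sum_const, smul_eq_mul]
      intro U hU
      obtain ⟨hUpow, hUa, hUc⟩ := Finset.mem_filter.mp hU
      obtain ⟨hUm, hUcard⟩ := Finset.mem_powersetCard.mp hUpow
      have heU : e ∉ U := fun hmem => Finset.notMem_erase e _ (hUm hmem)
      -- the subtype-level copy of U
      set Usub : Finset {g : Sym2 V // g ∈ G.edgeFinset} :=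
        Finset.univ.filter (fun f => (f : Sym2 V) ∈ U) with hUsub
      have hUsubcard : Usub.card = k - 1 := by
        rw [← hUcard]
        refine Finset.card_nbij (fun f => (f : Sym2 V))
          (fun f hf => (Finset.mem_filter.mp hf).2)
          (fun f1 hf1 f2 hf2 hff => Subtype.ext hff) ?_
        intro g hg
        exact ⟨⟨g, (Finset.erase_subset _ _) (hUm (Finset.mem_coe.mp hg))⟩,
          Finset.mem_coe.mpr (Finset.mem_filter.mpr
            ⟨Finset.mem_univ _, Finset.mem_coe.mp hg⟩), rfl⟩
      have heUsub : (⟨e, heS⟩ : {g : Sym2 V // g ∈ G.edgeFinset}) ∉ Usub := by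
        simp only [hUsub, Finset.mem_filter, Finset.mem_univ, true_and]
        exact heU
      have hstep3 : (Finset.univ.filter
          (fun ω : Fin G.edgeFinset.card ≃ {e : Sym2 V // e ∈ G.edgeFinset} =>
            (ω ⟨k - 1, hp⟩ : Sym2 V) = e ∧
            J.edgeFinset.erase e ⊆ prefixEdges ω (k - 1) ∧
            ∃ v ∈ e, ∀ g ∈ prefixEdges ω (k - 1), v ∈ g → g ∈ J.edgeFinset)).filter
          (fun ω => prefixEdges ω (k - 1) = U) =
          Finset.univ.filter
          (fun ω : Fin G.edgeFinset.card ≃ {e : Sym2 V // e ∈ G.edgeFinset} =>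
            ω ⟨k - 1, hp⟩ = (⟨e, heS⟩ : {g : Sym2 V // g ∈ G.edgeFinset}) ∧
            ∀ j : Fin G.edgeFinset.card, (j : ℕ) < k - 1 → ω j ∈ Usub) := by
        ext ω
        simp only [Finset.mem_filter, Finset.mem_univ, true_and]
        constructor
        · rintro ⟨⟨h1, h2, h3⟩, h4⟩
          refine ⟨Subtype.ext h1, fun j hj => ?_⟩
          simp only [hUsub, Finset.mem_filter, Finset.mem_univ, true_and]
          rw [← h4]
          exact mem_prefixEdges.mpr ⟨j, hj, rfl⟩
        · rintro ⟨h1, h2⟩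
          have hpre : prefixEdges ω (k - 1) = U := by
            apply Finset.eq_of_subset_of_card_le
            · intro g hg
              obtain ⟨j, hj, rfl⟩ := mem_prefixEdges.mp hg
              have := h2 j hj
              simp only [hUsub, Finset.mem_filter, Finset.mem_univ, true_and] at this
              exact this
            · rw [hUcard, card_prefixEdges (by omega)]
          have h1' : (ω ⟨k - 1, hp⟩ : Sym2 V) = e := congrArg Subtype.val h1
          refine ⟨⟨h1', ?_, ?_⟩, hpre⟩
          · rw [hpre]; exact hUa
          · rw [hpre]; exact hUc
      rw [hstep3]
      have hNcard : Fintype.card {g : Sym2 V // g ∈ G.edgeFinset} = G.edgeFinset.card :=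
        Fintype.card_coe _
      have hkN : k ≤ G.edgeFinset.card := by omega
      have := countA hNcard hk hkN (⟨e, heS⟩ : {g : Sym2 V // g ∈ G.edgeFinset})
        Usub heUsub hUsubcard
      rw [Fintype.card_subtype] at this
      rw [this, hE]
    · -- the map lands in the target
      intro ω hω
      obtain ⟨h1, h2, h3⟩ := (Finset.mem_filter.mp hω).2
      refine Finset.mem_filter.mpr ⟨Finset.mem_powersetCard.mpr ⟨?_, ?_⟩, h2, h3⟩
      · intro g hg
        refine Finset.mem_erase.mpr ⟨?_, prefixEdges_subset hg⟩
        intro hge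
        rw [hge, ← h1] at hg
        exact not_mem_prefixEdges_self hp hg
      · exact card_prefixEdges (by omega)
  -- final arithmetic
  have hsum : ∀ e ∈ J.edgeFinset,
      (((Finset.univ.filter
        (fun ω : Fin G.edgeFinset.card ≃ {e : Sym2 V // e ∈ G.edgeFinset} =>
          (ω ⟨k - 1, hp⟩ : Sym2 V) ∈ J.edgeFinset ∧
          J.edgeFinset.erase (ω ⟨k - 1, hp⟩ : Sym2 V) ⊆ prefixEdges ω (k - 1) ∧
          ∃ v ∈ (ω ⟨k - 1, hp⟩ : Sym2 V),
            ∀ g ∈ prefixEdges ω (k - 1), v ∈ g → g ∈ J.edgeFinset)).filter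
        (fun ω => (ω ⟨k - 1, hp⟩ : Sym2 V) = e)).card : ℤ) =
      (((k - 1).factorial : ℤ) * ((E - k).factorial : ℤ)) *
        (2 * ((E - h - Δ).choose (k - h) : ℤ) - ((E - h - 2 * Δ).choose (k - h) : ℤ)) := by
    intro e he
    rw [key e he]
    have h2 := card_Ue G J d δ hG hJG hJ h E Δ k hh hE hΔ hk1 hk2 e he
    have h3 : ((((G.edgeFinset.erase e).powersetCard (k - 1)).filter
        (fun U => J.edgeFinset.erase e ⊆ U ∧
          ∃ v ∈ e, ∀ g ∈ U, v ∈ g → g ∈ J.edgeFinset)).card : ℤ) =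
        2 * ((E - h - Δ).choose (k - h) : ℤ) - ((E - h - 2 * Δ).choose (k - h) : ℤ) := by
      have := congrArg (fun n : ℕ => (n : ℤ)) h2
      push_cast at this
      linarith
    push_cast
    rw [h3]
    ring
  rw [Nat.cast_sum, Finset.sum_congr rfl hsum, Finset.sum_const, nsmul_eq_mul, ← hh]
  push_cast
  ring
end

section
/- For all integers r ≥ 3, n ≥ 1, and i with 2 ≤ i ≤ r, one has binom(nr, r) − binom(nr−i, r) ≥ (binom(nr, r) − binom(nr−1, r)) · (2 − (r−1)/(nr−1)), where binom(a, b) is interpreted as 0 when b > a. -/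
lemma pascal_sub_aux (a b : ℕ) (ha : 1 ≤ a) (hb : 1 ≤ b) :
    a.choose b = (a-1).choose (b-1) + (a-1).choose b := by
  obtain ⟨a, rfl⟩ := Nat.exists_eq_succ_of_ne_zero (by omega : a ≠ 0)
  obtain ⟨b, rfl⟩ := Nat.exists_eq_succ_of_ne_zero (by omega : b ≠ 0)
  simp [Nat.choose_succ_succ]

/-- For all integers `r ≥ 3`, `n ≥ 1` and `2 ≤ i ≤ r`, one has
`C(nr,r) − C(nr−i,r) ≥ (C(nr,r) − C(nr−1,r))·(2 − (r−1)/(nr−1))` (as real numbers). -/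
theorem choose_difference_inequality (r n i : ℕ) (hr : 3 ≤ r) (hn : 1 ≤ n)
    (hi : 2 ≤ i) (hir : i ≤ r) :
    (((n * r).choose r : ℝ) - ((n * r - i).choose r : ℝ)) ≥
      (((n * r).choose r : ℝ) - ((n * r - 1).choose r : ℝ)) *
        (2 - ((r : ℝ) - 1) / ((n : ℝ) * (r : ℝ) - 1)) := by
  have hrN : r ≤ n * r := Nat.le_mul_of_pos_left r hn
  set N := n * r with hN
  have hN3 : 3 ≤ N := le_trans hr hrN
  -- key identity
  have key : (N-2).choose (r-1) * (N-1) = (N-1).choose (r-1) * (N - r) := by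
    have h := Nat.choose_mul_succ_eq (N-2) (r-1)
    rw [show N - 2 + 1 = N - 1 by omega, show N - 1 - (r-1) = N - r by omega] at h
    exact h
  have p1 : N.choose r = (N-1).choose (r-1) + (N-1).choose r :=
    pascal_sub_aux N r (by omega) (by omega)
  have p2 : (N-1).choose r = (N-2).choose (r-1) + (N-2).choose r := by
    have h := pascal_sub_aux (N-1) r (by omega) (by omega)
    rwa [show N - 1 - 1 = N - 2 by omega] at h
  have mono : (N-i).choose r ≤ (N-2).choose r := Nat.choose_le_choose r (by omega)
  -- real versions
  have hNR : (n:ℝ) * (r:ℝ) = (N:ℝ) := by rw [hN]; push_cast; ring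
  have hx : (0:ℝ) < (N:ℝ) - 1 := by
    have : (3:ℝ) ≤ (N:ℝ) := by exact_mod_cast hN3
    linarith
  set A : ℝ := ((N-1).choose (r-1) : ℝ) with hA
  set B : ℝ := ((N-2).choose (r-1) : ℝ) with hB
  have keyR : B * ((N:ℝ) - 1) = A * ((N:ℝ) - (r:ℝ)) := by
    have h1 : ((N-1 : ℕ):ℝ) = (N:ℝ) - 1 := by
      rw [Nat.cast_sub (by omega)]; norm_num
    have h2 : ((N-r : ℕ):ℝ) = (N:ℝ) - (r:ℝ) := by rw [Nat.cast_sub hrN]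
    rw [hA, hB, ← h1, ← h2]
    exact_mod_cast key
  have hAB : A * (((r:ℝ) - 1) / ((N:ℝ) - 1)) = A - B := by
    field_simp
    nlinarith [keyR]
  have p1R : (N.choose r : ℝ) = A + ((N-1).choose r : ℝ) := by
    rw [hA]; exact_mod_cast p1
  have p2R : ((N-1).choose r : ℝ) = B + ((N-2).choose r : ℝ) := by
    rw [hB]; exact_mod_cast p2
  have monoR : ((N-i).choose r : ℝ) ≤ ((N-2).choose r : ℝ) := by exact_mod_cast mono
  rw [hNR]
  have : ((N.choose r : ℝ) - ((N-1).choose r : ℝ)) * (2 - ((r:ℝ) - 1) / ((N:ℝ) - 1))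
      = A + B := by
    have e : ((N.choose r : ℝ) - ((N-1).choose r : ℝ)) = A := by rw [p1R]; ring
    rw [e, mul_sub, hAB]; ring
  rw [this]
  have : (N.choose r : ℝ) - ((N-2).choose r : ℝ) = A + B := by rw [p1R, p2R]; ring
  linarith
end

section
/- For every integer n ≥ 2 and every real number A ≥ n², one has | log( A(A−1)(A−2)⋯(A−(n−1)) / A^n ) + n²/(2A) | ≤ 2/n. -/
lemma log_one_sub_bounds (x : ℝ) (h0 : 0 ≤ x) (h1 : x ≤ 1/2) :
    -x - 2*x^2 ≤ Real.log (1 - x) ∧ Real.log (1 - x) ≤ -x := by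
  have hx : (0:ℝ) < 1 - x := by linarith
  constructor
  · have h := Real.log_le_sub_one_of_pos (show (0:ℝ) < (1-x)⁻¹ by positivity)
    rw [Real.log_inv] at h
    have h2 : (1-x)⁻¹ - 1 = x / (1-x) := by field_simp; ring
    have h3 : x / (1-x) ≤ x + 2*x^2 := by
      rw [div_le_iff₀ hx]; nlinarith
    rw [h2] at h
    linarith
  · have := Real.log_le_sub_one_of_pos hx
    linarith

lemma sum_range_cast_real (n : ℕ) (hn : 1 ≤ n) :
    ∑ j ∈ Finset.range n, (j:ℝ) = (n:ℝ) * ((n:ℝ) - 1) / 2 := by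
  have h := congrArg (Nat.cast (R := ℝ)) (Finset.sum_range_id_mul_two n)
  push_cast [Nat.cast_sub hn] at h
  linarith

/-- For every integer `n ≥ 2` and every real `A ≥ n²`,
`| log(A(A−1)⋯(A−(n−1))/Aⁿ) + n²/(2A) | ≤ 2/n`. -/
theorem log_falling_factorial_estimate (n : ℕ) (hn : 2 ≤ n) (A : ℝ)
    (hA : (n : ℝ) ^ 2 ≤ A) :
    |Real.log ((∏ j ∈ Finset.range n, (A - (j : ℝ))) / A ^ n) +
        (n : ℝ) ^ 2 / (2 * A)| ≤ 2 / (n : ℝ) := by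
  have hn1 : (2:ℝ) ≤ (n:ℝ) := by exact_mod_cast hn
  have hA0 : (0:ℝ) < A := by nlinarith
  have hprod : (∏ j ∈ Finset.range n, (A - (j : ℝ))) / A ^ n
      = ∏ j ∈ Finset.range n, (1 - (j:ℝ) / A) := by
    calc (∏ j ∈ Finset.range n, (A - (j : ℝ))) / A ^ n
        = (∏ j ∈ Finset.range n, (A - (j : ℝ))) / ∏ _j ∈ Finset.range n, A := by
          rw [Finset.prod_const, Finset.card_range]
      _ = ∏ j ∈ Finset.range n, ((A - (j:ℝ)) / A) := (Finset.prod_div_distrib (fun j : ℕ => A - (j:ℝ)) (fun _ => A)).symm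
      _ = ∏ j ∈ Finset.range n, (1 - (j:ℝ)/A) := by
          refine Finset.prod_congr rfl fun j _ => ?_
          rw [sub_div, div_self hA0.ne']
  have hxj : ∀ j ∈ Finset.range n, 0 ≤ (j:ℝ)/A ∧ (j:ℝ)/A ≤ 1/2 := by
    intro j hj
    have hj' : (j:ℝ) ≤ (n:ℝ) - 1 := by
      have := Finset.mem_range.mp hj
      have : (j:ℝ) + 1 ≤ (n:ℝ) := by exact_mod_cast this
      linarith
    refine ⟨by positivity, ?_⟩
    rw [div_le_iff₀ hA0]; nlinarith
  have hpos : ∀ j ∈ Finset.range n, (0:ℝ) < 1 - (j:ℝ)/A := by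
    intro j hj
    have := (hxj j hj).2
    linarith
  have hlog : Real.log ((∏ j ∈ Finset.range n, (A - (j : ℝ))) / A ^ n)
      = ∑ j ∈ Finset.range n, Real.log (1 - (j:ℝ)/A) := by
    rw [hprod, Real.log_prod]
    intro j hj
    exact ne_of_gt (hpos j hj)
  have hsumj : ∑ j ∈ Finset.range n, (j:ℝ)/A = (n:ℝ) * ((n:ℝ) - 1) / 2 / A := by
    rw [← Finset.sum_div, sum_range_cast_real n (by omega)]
  -- upper bound of the sum
  have hub : ∑ j ∈ Finset.range n, Real.log (1 - (j:ℝ)/A)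
      ≤ -((n:ℝ) * ((n:ℝ) - 1) / 2 / A) := by
    have h1 : ∑ j ∈ Finset.range n, Real.log (1 - (j:ℝ)/A)
        ≤ ∑ j ∈ Finset.range n, (-((j:ℝ)/A)) :=
      Finset.sum_le_sum fun j hj => (log_one_sub_bounds _ (hxj j hj).1 (hxj j hj).2).2
    have h2 : ∑ j ∈ Finset.range n, (-((j:ℝ)/A)) = -((n:ℝ) * ((n:ℝ) - 1) / 2 / A) := by
      rw [Finset.sum_neg_distrib, hsumj]
    linarith
  -- sum of squares bound
  have hsq : ∑ j ∈ Finset.range n, ((j:ℝ)/A)^2 ≤ (n:ℝ)^3 / A^2 := by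
    calc ∑ j ∈ Finset.range n, ((j:ℝ)/A)^2
        ≤ ∑ _j ∈ Finset.range n, ((n:ℝ)^2 / A^2) := by
          refine Finset.sum_le_sum fun j hj => ?_
          have hj' : (j:ℝ) ≤ (n:ℝ) := by
            exact_mod_cast le_of_lt (Finset.mem_range.mp hj)
          have h0 : (0:ℝ) ≤ (j:ℝ) := by positivity
          rw [div_pow]
          gcongr
      _ = (n:ℝ) * ((n:ℝ)^2 / A^2) := by
          rw [Finset.sum_const, Finset.card_range]; simp [nsmul_eq_mul]
      _ = (n:ℝ)^3 / A^2 := by ring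
  -- lower bound of the sum
  have hlb : -((n:ℝ) * ((n:ℝ) - 1) / 2 / A) - 2 * ((n:ℝ)^3 / A^2)
      ≤ ∑ j ∈ Finset.range n, Real.log (1 - (j:ℝ)/A) := by
    have h1 : ∑ j ∈ Finset.range n, (-((j:ℝ)/A) - 2*((j:ℝ)/A)^2)
        ≤ ∑ j ∈ Finset.range n, Real.log (1 - (j:ℝ)/A) :=
      Finset.sum_le_sum fun j hj => (log_one_sub_bounds _ (hxj j hj).1 (hxj j hj).2).1
    have h2 : ∑ j ∈ Finset.range n, (-((j:ℝ)/A) - 2*((j:ℝ)/A)^2)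
        = -((n:ℝ) * ((n:ℝ) - 1) / 2 / A)
          - 2 * ∑ j ∈ Finset.range n, ((j:ℝ)/A)^2 := by
      rw [Finset.sum_sub_distrib, Finset.sum_neg_distrib, hsumj, ← Finset.mul_sum]
    linarith
  rw [hlog, abs_le]
  have key1 : (n:ℝ)^3 / A^2 ≤ 1 / (n:ℝ) := by
    rw [div_le_div_iff₀ (by positivity) (by linarith)]
    nlinarith
  have key2 : (n:ℝ) / (2*A) ≤ 1 / (2*(n:ℝ)) := by
    rw [div_le_div_iff₀ (by linarith) (by linarith)]
    nlinarith
  have hexp : (n:ℝ)^2 / (2*A) - (n:ℝ) * ((n:ℝ)-1) / 2 / A = (n:ℝ)/(2*A) := by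
    field_simp; ring
  have hq1 : 2 * (1/(n:ℝ)) = 2/(n:ℝ) := by ring
  have hq2 : (1:ℝ)/(2*(n:ℝ)) ≤ 2/(n:ℝ) := by
    rw [div_le_div_iff₀ (by linarith) (by linarith)]; nlinarith
  have h0n : (0:ℝ) ≤ (n:ℝ)/(2*A) := by positivity
  constructor
  · linarith
  · linarith
end
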